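/- Let v_1, ..., v_n ∈ ℝ^d and set A_ij = ⟨v_i, v_j⟩. Then twice the maximum over all partitions P of {1, ..., n} of the correlation clustering objective ∑_{i<j, i and j in the same block of P} A_ij, plus ∑_{i=1}^n ‖v_i‖², equals the maximum over all partitions of {1, ..., n} into at most d + 1 blocks of the vector-partition objective ∑_{B} ‖S_B‖². In particular, a partition maximizes the correlation clustering objective if and only if it maximizes the vector-partition objective. -/
import Mathlib


open Finset
open scoped RealInnerProductSpace

/-- The vector-partition objective: sum over blocks of the squared norm of the
block's sum point `S_B = ∑ i ∈ B, v i`. -/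
noncomputable def vpObj {n d : ℕ} (v : Fin n → EuclideanSpace ℝ (Fin d))
    (P : Finpartition (Finset.univ : Finset (Fin n))) : ℝ :=
  ∑ B ∈ P.parts, ‖∑ i ∈ B, v i‖ ^ 2

/-- The correlation clustering objective: sum of `A i j = ⟪v i, v j⟫` over pairs
`i < j` lying in the same block of the partition. -/
noncomputable def ccObj {n d : ℕ} (v : Fin n → EuclideanSpace ℝ (Fin d))
    (P : Finpartition (Finset.univ : Finset (Fin n))) : ℝ :=
  ∑ p ∈ Finset.univ.filter
      (fun p : Fin n × Fin n => p.1 < p.2 ∧ ∃ B ∈ P.parts, p.1 ∈ B ∧ p.2 ∈ B),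
    ⟪v p.1, v p.2⟫

lemma double_sum_eq {ι : Type*} [LinearOrder ι] (s : Finset ι) (F : ι → ι → ℝ)
    (hF : ∀ i j, F i j = F j i) :
    ∑ i ∈ s, ∑ j ∈ s, F i j =
      (∑ i ∈ s, F i i) + 2 * ∑ p ∈ (s ×ˢ s).filter (fun p => p.1 < p.2), F p.1 p.2 := by
  classical
  rw [← Finset.sum_product']
  have h1 : ∑ p ∈ (s ×ˢ s), F p.1 p.2 =
      ∑ p ∈ (s ×ˢ s).filter (fun p => p.1 < p.2), F p.1 p.2 +
      ∑ p ∈ (s ×ˢ s).filter (fun p => ¬ p.1 < p.2), F p.1 p.2 :=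
    (Finset.sum_filter_add_sum_filter_not _ _ _).symm
  have h2 : ∑ p ∈ (s ×ˢ s).filter (fun p => ¬ p.1 < p.2), F p.1 p.2 =
      ∑ p ∈ (s ×ˢ s).filter (fun p => p.2 < p.1), F p.1 p.2 +
      ∑ p ∈ (s ×ˢ s).filter (fun p => p.1 = p.2), F p.1 p.2 := by
    rw [← Finset.sum_union]
    · congr 1
      ext p
      simp only [Finset.mem_filter, Finset.mem_union]
      constructor
      · rintro ⟨hp, h⟩
        rcases lt_or_eq_of_le (not_lt.mp h) with h' | h'
        · exact Or.inl ⟨hp, h'⟩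
        · exact Or.inr ⟨hp, h'.symm⟩
      · rintro (⟨hp, h⟩ | ⟨hp, h⟩)
        · exact ⟨hp, not_lt.mpr h.le⟩
        · exact ⟨hp, by simp [h]⟩
    · rw [Finset.disjoint_filter]
      rintro p _ h h'
      exact h.ne' h'
  have h3 : ∑ p ∈ (s ×ˢ s).filter (fun p => p.2 < p.1), F p.1 p.2 =
      ∑ p ∈ (s ×ˢ s).filter (fun p => p.1 < p.2), F p.1 p.2 := by
    apply Finset.sum_nbij' (fun p => (p.2, p.1)) (fun p => (p.2, p.1)) <;>
      simp +contextual [Finset.mem_filter, and_comm, hF _ _]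
  have h4 : ∑ p ∈ (s ×ˢ s).filter (fun p => p.1 = p.2), F p.1 p.2 = ∑ i ∈ s, F i i := by
    apply Finset.sum_nbij' (fun p => p.1) (fun i => (i, i)) <;>
      simp +contextual [Finset.mem_filter]
  rw [h1, h2, h3, h4]; ring


lemma card_le_of_pairwise_inner_neg {d : ℕ} {ι : Type*} [DecidableEq ι] (s : Finset ι)
    (f : ι → EuclideanSpace ℝ (Fin d))
    (h : ∀ i ∈ s, ∀ j ∈ s, i ≠ j → ⟪f i, f j⟫ < 0) : s.card ≤ d + 1 := by
  classical
  by_contra hcard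
  push_neg at hcard
  have hs : s.Nonempty := Finset.card_pos.mp (by omega)
  obtain ⟨i₀, hi₀⟩ := hs
  set s' := s.erase i₀ with hs'
  have hinj : Set.InjOn f s := by
    intro i hi j hj hij
    by_contra hne
    have := h i hi j hj hne
    rw [hij] at this
    exact absurd this (not_lt.mpr real_inner_self_nonneg)
  set t := s'.image f with ht
  have htcard : d < t.card := by
    rw [ht, Finset.card_image_of_injOn (hinj.mono (Finset.coe_subset.mpr (Finset.erase_subset _ _)))]
    rw [Finset.card_erase_of_mem hi₀]
    omega
  have hneg : ∀ x ∈ t, ∀ y ∈ t, x ≠ y → ⟪x, y⟫ < 0 := by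
    rintro x hx y hy hxy
    obtain ⟨i, hi, rfl⟩ := Finset.mem_image.mp hx
    obtain ⟨j, hj, rfl⟩ := Finset.mem_image.mp hy
    exact h i (Finset.mem_of_mem_erase hi) j (Finset.mem_of_mem_erase hj)
      (fun hij => hxy (congrArg f hij))
  have hneg₀ : ∀ x ∈ t, ⟪x, f i₀⟫ < 0 := by
    rintro x hx
    obtain ⟨i, hi, rfl⟩ := Finset.mem_image.mp hx
    exact h i (Finset.mem_of_mem_erase hi) i₀ hi₀ (Finset.ne_of_mem_erase hi)
  obtain ⟨c, hsum, x₀, hx₀, hc₀⟩ :=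
    Module.exists_nontrivial_relation_of_finrank_lt_card
      (R := ℝ) (by rw [finrank_euclideanSpace_fin]; exact htcard)
  set Pp := t.filter (fun x => 0 < c x) with hPp
  set Nn := t.filter (fun x => c x < 0) with hNn
  set u : EuclideanSpace ℝ (Fin d) := ∑ x ∈ Pp, c x • x with hu
  have hu2 : u = ∑ x ∈ Nn, (-c x) • x := by
    have h1 : ∑ x ∈ t, c x • x =
        ∑ x ∈ Pp, c x • x + ∑ x ∈ t.filter (fun x => ¬ 0 < c x), c x • x :=
      (Finset.sum_filter_add_sum_filter_not _ _ _).symm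
    have h2 : ∑ x ∈ t.filter (fun x => ¬ 0 < c x), c x • x = ∑ x ∈ Nn, c x • x := by
      refine (Finset.sum_subset ?_ ?_).symm
      · intro x hx
        rw [Finset.mem_filter] at hx ⊢
        exact ⟨hx.1, not_lt.mpr hx.2.le⟩
      · intro x hx hnx
        rw [Finset.mem_filter] at hx
        rw [hNn, Finset.mem_filter, not_and, not_lt] at hnx
        have h0 : c x = 0 := le_antisymm (not_lt.mp hx.2) (hnx hx.1)
        simp [h0]
    have h3 : u + ∑ x ∈ Nn, c x • x = 0 := by rw [hu, ← h2, ← h1, hsum]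
    have h4 : ∑ x ∈ Nn, (-c x) • x = -∑ x ∈ Nn, c x • x := by
      simp [neg_smul]
    rw [h4]
    linear_combination (norm := module) h3
  have key0 : ⟪(∑ x ∈ Pp, c x • x : EuclideanSpace ℝ (Fin d)),
      ∑ y ∈ Nn, (-c y) • y⟫ ≤ 0 := by
    rw [sum_inner]
    apply Finset.sum_nonpos
    intro x hx
    rw [real_inner_smul_left, inner_sum]
    rw [hPp, Finset.mem_filter] at hx
    apply mul_nonpos_of_nonneg_of_nonpos hx.2.le
    apply Finset.sum_nonpos
    intro y hy
    rw [hNn, Finset.mem_filter] at hy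
    rw [real_inner_smul_right]
    have hxy : x ≠ y := fun hxy => absurd (hxy ▸ hx.2) (not_lt.mpr hy.2.le)
    exact mul_nonpos_of_nonneg_of_nonpos (by linarith [hy.2]) (hneg x hx.1 y hy.1 hxy).le
  have huu : ⟪u, u⟫ ≤ 0 := by
    nth_rewrite 2 [hu2]
    rw [hu]
    exact key0
  have hu0 : u = 0 := inner_self_eq_zero.mp (le_antisymm huu real_inner_self_nonneg)
  have hPpe : Pp = ∅ := by
    by_contra hne
    have hne' : Pp.Nonempty := Finset.nonempty_iff_ne_empty.mpr hne
    have hlt : ⟪u, f i₀⟫ < 0 := by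
      rw [hu, sum_inner]
      have := Finset.sum_lt_sum_of_nonempty hne'
        (f := fun x => ⟪c x • x, f i₀⟫) (g := fun _ => (0 : ℝ)) ?_
      · simpa using this
      · intro x hx
        rw [hPp, Finset.mem_filter] at hx
        simp only [real_inner_smul_left]
        exact mul_neg_of_pos_of_neg hx.2 (hneg₀ x hx.1)
    rw [hu0] at hlt
    simp at hlt
  have hNne : Nn = ∅ := by
    by_contra hne
    have hne' : Nn.Nonempty := Finset.nonempty_iff_ne_empty.mpr hne
    have hlt : ⟪u, f i₀⟫ < 0 := by
      rw [hu2, sum_inner]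
      have := Finset.sum_lt_sum_of_nonempty hne'
        (f := fun x => ⟪(-c x) • x, f i₀⟫) (g := fun _ => (0 : ℝ)) ?_
      · simpa using this
      · intro x hx
        rw [hNn, Finset.mem_filter] at hx
        simp only [neg_smul, inner_neg_left, real_inner_smul_left]
        have h5 := hneg₀ x hx.1
        nlinarith [hx.2, h5]
    rw [hu0] at hlt
    simp at hlt
  rcases lt_trichotomy (c x₀) 0 with h0 | h0 | h0
  · exact absurd (hNn ▸ Finset.mem_filter.mpr ⟨hx₀, h0⟩) (by simp [hNne])
  · exact hc₀ h0
  · exact absurd (hPp ▸ Finset.mem_filter.mpr ⟨hx₀, h0⟩) (by simp [hPpe])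


lemma vpObj_eq_ccObj {n d : ℕ} (v : Fin n → EuclideanSpace ℝ (Fin d))
    (P : Finpartition (Finset.univ : Finset (Fin n))) :
    vpObj v P = 2 * ccObj v P + ∑ i, ‖v i‖ ^ 2 := by
  classical
  have key : ∀ B : Finset (Fin n), ‖∑ i ∈ B, v i‖ ^ 2 =
      (∑ i ∈ B, ‖v i‖ ^ 2) +
      2 * ∑ p ∈ (B ×ˢ B).filter (fun p => p.1 < p.2), ⟪v p.1, v p.2⟫ := by
    intro B
    rw [← real_inner_self_eq_norm_sq, sum_inner]
    simp_rw [inner_sum]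
    rw [double_sum_eq B (fun i j => ⟪v i, v j⟫) (fun i j => real_inner_comm _ _)]
    simp_rw [real_inner_self_eq_norm_sq]
  simp_rw [vpObj, key, Finset.sum_add_distrib]
  have hdiag : ∑ B ∈ P.parts, ∑ i ∈ B, ‖v i‖ ^ 2 = ∑ i, ‖v i‖ ^ 2 := by
    conv_rhs => rw [← P.biUnion_parts]
    rw [Finset.sum_biUnion P.disjoint]
    rfl
  have hoff : ∑ B ∈ P.parts, ∑ p ∈ (B ×ˢ B).filter (fun p => p.1 < p.2), ⟪v p.1, v p.2⟫
      = ccObj v P := by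
    rw [ccObj, ← Finset.sum_biUnion]
    · congr 1
      ext p
      simp only [Finset.mem_biUnion, Finset.mem_filter, Finset.mem_univ, true_and,
        Finset.mem_product]
      constructor
      · rintro ⟨B, hB, ⟨h1, h2⟩, hlt⟩
        exact ⟨hlt, B, hB, h1, h2⟩
      · rintro ⟨hlt, B, hB, h1, h2⟩
        exact ⟨B, hB, ⟨h1, h2⟩, hlt⟩
    · intro B hB B' hB' hne
      simp only [Function.onFun, Finset.disjoint_left, Finset.mem_filter, Finset.mem_product]
      rintro p ⟨⟨h1, h2⟩, -⟩ ⟨⟨h1', h2'⟩, -⟩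
      exact hne (P.eq_of_mem_parts hB hB' h1 h1')
  rw [hdiag, ← Finset.mul_sum, hoff]
  ring


lemma exists_merge {n d : ℕ} (v : Fin n → EuclideanSpace ℝ (Fin d))
    (P : Finpartition (Finset.univ : Finset (Fin n))) (hP : d + 1 < P.parts.card) :
    ∃ Q : Finpartition (Finset.univ : Finset (Fin n)),
      Q.parts.card < P.parts.card ∧ vpObj v P ≤ vpObj v Q := by
  classical
  -- find two distinct parts with nonnegative inner product of their sums
  have hex : ∃ B₁ ∈ P.parts, ∃ B₂ ∈ P.parts, B₁ ≠ B₂ ∧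
      0 ≤ ⟪∑ i ∈ B₁, v i, ∑ i ∈ B₂, v i⟫ := by
    by_contra hcon
    push_neg at hcon
    have := card_le_of_pairwise_inner_neg P.parts (fun B => ∑ i ∈ B, v i)
      (fun B₁ h1 B₂ h2 hne => hcon B₁ h1 B₂ h2 hne)
    omega
  obtain ⟨B₁, hB₁, B₂, hB₂, hne, hinner⟩ := hex
  have hd : Disjoint B₁ B₂ := P.disjoint (Finset.mem_coe.mpr hB₁) (Finset.mem_coe.mpr hB₂) hne
  have hB₁ne : B₁.Nonempty := P.nonempty_of_mem_parts hB₁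
  set R := (P.parts.erase B₁).erase B₂ with hR
  set cB := B₁ ∪ B₂ with hcB
  have hB2e : B₂ ∈ P.parts.erase B₁ := Finset.mem_erase.mpr ⟨hne.symm, hB₂⟩
  have partsEq : P.parts = insert B₁ (insert B₂ R) := by
    rw [hR, Finset.insert_erase hB2e, Finset.insert_erase hB₁]
  have hRsub : R ⊆ P.parts := (Finset.erase_subset _ _).trans (Finset.erase_subset _ _)
  have hB₁R : B₁ ∉ R := fun hmem => (Finset.mem_erase.mp (Finset.mem_erase.mp hmem).2).1 rfl
  have hB₂R : B₂ ∉ R := fun hmem => (Finset.mem_erase.mp hmem).1 rfl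
  have hRne : ∀ B ∈ R, B ≠ B₁ ∧ B ≠ B₂ := fun B hB =>
    ⟨(Finset.mem_erase.mp (Finset.mem_erase.mp hB).2).1, (Finset.mem_erase.mp hB).1⟩
  have hcR : cB ∉ R := by
    intro hmem
    have h1 : Disjoint cB B₁ := P.disjoint (Finset.mem_coe.mpr (hRsub hmem))
      (Finset.mem_coe.mpr hB₁) (hRne cB hmem).1
    have : Disjoint B₁ B₁ := h1.mono_left (Finset.subset_union_left)
    exact hB₁ne.ne_empty (disjoint_self.mp this)
  have hdiscR : ∀ B ∈ R, Disjoint cB B := by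
    intro B hB
    rw [hcB, Finset.disjoint_union_left]
    exact ⟨P.disjoint (Finset.mem_coe.mpr hB₁) (Finset.mem_coe.mpr (hRsub hB)) (hRne B hB).1.symm,
      P.disjoint (Finset.mem_coe.mpr hB₂) (Finset.mem_coe.mpr (hRsub hB)) (hRne B hB).2.symm⟩
  refine ⟨⟨insert cB R, ?_, ?_, ?_⟩, ?_, ?_⟩
  · -- supIndep
    rw [Finset.supIndep_iff_pairwiseDisjoint]
    intro x hx y hy hxy
    simp only [Finset.coe_insert, Set.mem_insert_iff, Finset.mem_coe] at hx hy
    rcases hx with rfl | hx <;> rcases hy with rfl | hy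
    · exact absurd rfl hxy
    · exact hdiscR y hy
    · exact (hdiscR x hx).symm
    · exact P.disjoint (Finset.mem_coe.mpr (hRsub hx)) (Finset.mem_coe.mpr (hRsub hy)) hxy
  · -- sup_parts
    have := P.sup_parts
    rw [partsEq, Finset.sup_insert, Finset.sup_insert] at this
    rw [Finset.sup_insert, ← this, hcB]
    simp [sup_assoc, Finset.sup_eq_union]
  · -- not_bot_mem
    intro hmem
    rcases Finset.mem_insert.mp hmem with h | h
    · refine hB₁ne.ne_empty (Finset.subset_empty.mp ?_)
      calc B₁ ⊆ cB := Finset.subset_union_left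
        _ = ⊥ := h.symm
    · exact P.bot_notMem (hRsub h)
  · -- card decreases
    show (insert cB R).card < P.parts.card
    rw [Finset.card_insert_of_notMem hcR, hR,
      Finset.card_erase_of_mem hB2e, Finset.card_erase_of_mem hB₁]
    have h2 : 2 ≤ P.parts.card := by omega
    omega
  · -- vpObj increases
    show vpObj v P ≤ ∑ B ∈ insert cB R, ‖∑ i ∈ B, v i‖ ^ 2
    rw [Finset.sum_insert hcR, vpObj, partsEq, Finset.sum_insert, Finset.sum_insert hB₂R]
    · have hsum : ∑ i ∈ cB, v i = (∑ i ∈ B₁, v i) + ∑ i ∈ B₂, v i := Finset.sum_union hd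
      rw [hsum, norm_add_sq_real]
      linarith
    · exact Finset.mem_insert.not.mpr (by push_neg; exact ⟨hne, hB₁R⟩)

lemma exists_small {n d : ℕ} (v : Fin n → EuclideanSpace ℝ (Fin d))
    (P : Finpartition (Finset.univ : Finset (Fin n))) :
    ∃ Q : Finpartition (Finset.univ : Finset (Fin n)),
      Q.parts.card ≤ d + 1 ∧ vpObj v P ≤ vpObj v Q := by
  generalize hk : P.parts.card = k
  induction k using Nat.strong_induction_on generalizing P with
  | _ k ih =>
    by_cases hle : P.parts.card ≤ d + 1
    · exact ⟨P, hle, le_refl _⟩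
    · obtain ⟨Q', hQ'card, hQ'obj⟩ := exists_merge v P (by omega)
      obtain ⟨Q, hQcard, hQobj⟩ := ih Q'.parts.card (by omega) Q' rfl
      exact ⟨Q, hQcard, hQ'obj.trans hQobj⟩


/-- Twice the maximum correlation clustering objective plus `∑ i, ‖v i‖²` equals the
maximum of the vector-partition objective over partitions into at most `d + 1` blocks;
in particular a partition maximizes one objective iff it maximizes the other
(Theorem 1 of the paper). -/
theorem two_mul_max_ccObj_add_eq_max_vpObj {n d : ℕ}
    (v : Fin n → EuclideanSpace ℝ (Fin d)) (m₁ m₂ : ℝ)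
    (h₁ : IsGreatest (Set.range (ccObj v)) m₁)
    (h₂ : IsGreatest (vpObj v ''
      {P : Finpartition (Finset.univ : Finset (Fin n)) | P.parts.card ≤ d + 1}) m₂) :
    2 * m₁ + ∑ i, ‖v i‖ ^ 2 = m₂ ∧
    ∀ P : Finpartition (Finset.univ : Finset (Fin n)),
      (∀ Q : Finpartition (Finset.univ : Finset (Fin n)), ccObj v Q ≤ ccObj v P) ↔
      (∀ Q : Finpartition (Finset.univ : Finset (Fin n)), vpObj v Q ≤ vpObj v P) := by
  have key := vpObj_eq_ccObj v
  constructor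
  · obtain ⟨P₀, hP₀⟩ := h₁.1
    have le1 : m₂ ≤ 2 * m₁ + ∑ i, ‖v i‖ ^ 2 := by
      obtain ⟨P, _, hPeq⟩ := h₂.1
      have hcc : ccObj v P ≤ m₁ := h₁.2 ⟨P, rfl⟩
      have := key P
      linarith [hPeq ▸ this]
    have le2 : 2 * m₁ + ∑ i, ‖v i‖ ^ 2 ≤ m₂ := by
      obtain ⟨Q, hQcard, hQobj⟩ := exists_small v P₀
      have hQle : vpObj v Q ≤ m₂ := h₂.2 ⟨Q, hQcard, rfl⟩
      have h1 := key P₀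
      linarith [hP₀ ▸ h1]
    linarith
  · intro P
    constructor
    · intro hmax Q
      have h1 := key Q
      have h2 := key P
      have := hmax Q
      linarith
    · intro hmax Q
      have h1 := key Q
      have h2 := key P
      have := hmax Q
      linarith
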